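/- arXiv:1805.03320 — 4 statements merged into one kernel-verified Lean document; each statement's English description precedes it below -/
import Mathlib

section
/- (Uniformity of path sampling, Theorem 3.) Let V be a finite set, E ⊆ V × V a directed edge relation, c as above, l ≥ 1, and suppose the total number of length-l walks T = Σ_{v ∈ V} c(l, v) is positive. Let (v_0, v_1, …, v_l) be any length-l walk in G. Then c(l − i, v_i) ≥ 1 for every 0 ≤ i ≤ l, and the sampling probability of this walk, namely the real number (c(l, v_0) / T) · Π_{q=1}^{l} ( c(l − q, v_q) / c(l − q + 1, v_{q−1}) ), equals 1/T. In particular, every length-l walk is sampled with the same probability 1/T. -/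
open Finset

lemma telescope_aux (f : ℕ → ℝ) (hf : ∀ i, f i ≠ 0) (l : ℕ) :
    ∏ q ∈ Finset.Icc 1 l, f q / f (q - 1) = f l / f 0 := by
  induction l with
  | zero => simp [div_self (hf 0)]
  | succ n ih =>
      rw [Finset.prod_Icc_succ_top (by omega), ih]
      have : n + 1 - 1 = n := rfl
      rw [this, div_mul_div_comm, mul_comm (f 0), mul_div_mul_left _ _ (hf n)]

/-- Theorem 3, uniformity of path sampling: for any length-`l` walk
`v 0, v 1, …, v l`, the counts `c (l - i) (v i)` are positive, and the product of the
sampling probabilities of the path sampling algorithm equals `1 / T` where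
`T = ∑ v, c l v` is the total number of length-`l` walks. -/
theorem path_sampling_uniform {V : Type*} [Fintype V] [DecidableEq V]
    (E : V → V → Prop) [DecidableRel E]
    (c : ℕ → V → ℕ)
    (hc0 : ∀ v, c 0 v = 1)
    (hcs : ∀ k v, c (k + 1) v = ∑ u ∈ Finset.univ.filter (fun u => E v u), c k u)
    (l : ℕ) (hl : 1 ≤ l)
    (hT : 0 < ∑ v, c l v)
    (v : ℕ → V)
    (hw : ∀ i < l, E (v i) (v (i + 1))) :
    (∀ i ≤ l, 1 ≤ c (l - i) (v i)) ∧
    ((c l (v 0) : ℝ) / (∑ u, c l u)) *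
      ∏ q ∈ Finset.Icc 1 l,
        ((c (l - q) (v q) : ℝ) / (c (l - q + 1) (v (q - 1)))) =
      1 / (∑ u, c l u) := by
  have key : ∀ k, ∀ i, i ≤ l → l - i = k → 1 ≤ c k (v i) := by
    intro k
    induction k with
    | zero => intro i _ _; simp [hc0]
    | succ n ih =>
        intro i hi hk
        have hil : i < l := by omega
        have hE : E (v i) (v (i + 1)) := hw i hil
        have h1 : 1 ≤ c n (v (i + 1)) := ih (i + 1) (by omega) (by omega)
        rw [hcs]
        calc 1 ≤ c n (v (i + 1)) := h1
        _ ≤ ∑ u ∈ Finset.univ.filter (fun u => E (v i) u), c n u := by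
            apply Finset.single_le_sum (f := fun u => c n u) (fun _ _ => Nat.zero_le _)
            simp [hE]
  have pos : ∀ i ≤ l, 1 ≤ c (l - i) (v i) := fun i hi => key (l - i) i hi rfl
  refine ⟨pos, ?_⟩
  set f : ℕ → ℝ := fun i => (c (l - i) (v i) : ℝ) with hf
  have hfne : ∀ i, f i ≠ 0 := by
    intro i
    rcases le_or_gt i l with h | h
    · have := pos i h
      simp only [hf]
      positivity
    · have : l - i = 0 := by omega
      simp [hf, this, hc0]
  have hprod : ∏ q ∈ Finset.Icc 1 l,
      ((c (l - q) (v q) : ℝ) / (c (l - q + 1) (v (q - 1)))) =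
      ∏ q ∈ Finset.Icc 1 l, f q / f (q - 1) := by
    apply Finset.prod_congr rfl
    intro q hq
    simp only [Finset.mem_Icc] at hq
    have : l - q + 1 = l - (q - 1) := by omega
    rw [this]
  rw [hprod, telescope_aux f hfne l]
  have h0 : f l = 1 := by simp [hf, hc0]
  rw [h0]
  have hf0 : f 0 = (c l (v 0) : ℝ) := by simp [hf]
  rw [hf0]
  have hc0ne : (c l (v 0) : ℝ) ≠ 0 := by
    have := pos 0 (by omega)
    simp at this ⊢
    omega
  have hTne : ((∑ u, c l u : ℕ) : ℝ) ≠ 0 := by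
    exact_mod_cast hT.ne'
  rw [div_mul_div_comm, mul_one, mul_comm (↑(∑ u : V, c l u) : ℝ), div_mul_eq_div_div, div_self hc0ne]
end

section
/- (Multiplicative Chernoff bound, Theorem 5.) Let (Ω, 𝒫) be a probability space and Z_1, …, Z_n : Ω → ℝ mutually independent random variables with 0 ≤ Z_i ≤ 1 almost surely for each i. Let Z = Z_1 + ⋯ + Z_n and μ = E[Z] = E[Z_1] + ⋯ + E[Z_n]. Then for every ε with 0 ≤ ε ≤ 1, 𝒫[ |Z − μ| ≥ ε·μ ] ≤ 2·exp(−ε²·μ/3). -/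
open MeasureTheory ProbabilityTheory Finset Real

lemma chernoff_scalar_upper {ε : ℝ} (hε0 : 0 ≤ ε) (hε1 : ε ≤ 1) :
    Real.exp (3 * ε / 4) - 1 - (3 * ε / 4) * (1 + ε) ≤ -(ε ^ 2) / 3 := by
  have hb := Real.exp_bound' (x := 3 * ε / 4) (by linarith) (by linarith) (n := 4) (by norm_num)
  simp [Finset.sum_range_succ, Nat.factorial] at hb
  nlinarith [sq_nonneg ε, pow_le_pow_left₀ hε0 hε1 2, pow_le_pow_left₀ hε0 hε1 3,
    pow_le_pow_left₀ hε0 hε1 4, mul_nonneg hε0 hε0]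

lemma chernoff_scalar_lower {ε : ℝ} (hε0 : 0 ≤ ε) (hε1 : ε ≤ 1) :
    Real.exp (-ε) - 1 + ε * (1 - ε) ≤ -(ε ^ 2) / 3 := by
  have habs : |(-ε)| ≤ 1 := by rw [abs_neg, abs_of_nonneg hε0]; exact hε1
  have hb := Real.exp_bound habs (n := 4) (by norm_num)
  rw [abs_neg, abs_of_nonneg hε0] at hb
  simp [Finset.sum_range_succ, Nat.factorial] at hb
  rw [abs_le] at hb
  nlinarith [pow_le_pow_left₀ hε0 hε1 3, pow_le_pow_left₀ hε0 hε1 4,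
    sq_nonneg ε, mul_nonneg (mul_nonneg hε0 hε0) hε0]

lemma exp_mul_le_of_Icc {t x : ℝ} (hx0 : 0 ≤ x) (hx1 : x ≤ 1) :
    Real.exp (t * x) ≤ 1 + (Real.exp t - 1) * x := by
  have h := convexOn_exp.2 (Set.mem_univ (0 : ℝ)) (Set.mem_univ t)
    (by linarith : (0:ℝ) ≤ 1 - x) hx0 (by ring)
  simp only [smul_eq_mul, mul_zero, zero_add, Real.exp_zero, mul_one] at h
  calc Real.exp (t * x) = Real.exp (x * t) := by rw [mul_comm]
    _ ≤ 1 - x + x * Real.exp t := h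
    _ = 1 + (Real.exp t - 1) * x := by ring

lemma integrable_exp_mul_abs_le {Ω : Type*} [MeasurableSpace Ω] {P : Measure Ω}
    [IsProbabilityMeasure P] {X : Ω → ℝ} (hm : Measurable X) {C : ℝ}
    (hb : ∀ᵐ ω ∂P, |X ω| ≤ C) (t : ℝ) :
    Integrable (fun ω => Real.exp (t * X ω)) P := by
  refine Integrable.mono' (integrable_const (Real.exp (|t| * C)))
    ((hm.const_mul t).exp.aestronglyMeasurable) ?_
  filter_upwards [hb] with ω hω
  rw [Real.norm_eq_abs, abs_of_pos (Real.exp_pos _), Real.exp_le_exp]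
  calc t * X ω ≤ |t * X ω| := le_abs_self _
    _ = |t| * |X ω| := abs_mul _ _
    _ ≤ |t| * C := mul_le_mul_of_nonneg_left hω (abs_nonneg t)

lemma integrable_exp_mul_of_Icc {Ω : Type*} [MeasurableSpace Ω] {P : Measure Ω}
    [IsProbabilityMeasure P] {X : Ω → ℝ} (hm : Measurable X)
    (hb : ∀ᵐ ω ∂P, X ω ∈ Set.Icc (0 : ℝ) 1) (t : ℝ) :
    Integrable (fun ω => Real.exp (t * X ω)) P := by
  refine integrable_exp_mul_abs_le hm (C := 1) ?_ t
  filter_upwards [hb] with ω hω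
  exact abs_le.2 ⟨by linarith [hω.1], hω.2⟩

lemma integrable_of_Icc {Ω : Type*} [MeasurableSpace Ω] {P : Measure Ω}
    [IsProbabilityMeasure P] {X : Ω → ℝ} (hm : Measurable X)
    (hb : ∀ᵐ ω ∂P, X ω ∈ Set.Icc (0 : ℝ) 1) : Integrable X P := by
  refine Integrable.mono' (integrable_const 1) hm.aestronglyMeasurable ?_
  filter_upwards [hb] with ω hω
  rw [Real.norm_eq_abs]; exact abs_le.2 ⟨by linarith [hω.1], hω.2⟩

lemma cgf_le_of_Icc {Ω : Type*} [MeasurableSpace Ω] {P : Measure Ω}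
    [IsProbabilityMeasure P] {X : Ω → ℝ} (hm : Measurable X)
    (hb : ∀ᵐ ω ∂P, X ω ∈ Set.Icc (0 : ℝ) 1) (t : ℝ) :
    cgf X P t ≤ (Real.exp t - 1) * ∫ ω, X ω ∂P := by
  have hint := integrable_exp_mul_of_Icc hm hb t
  have hXint := integrable_of_Icc hm hb
  rw [cgf, Real.log_le_iff_le_exp (mgf_pos hint)]
  have h1 : mgf X P t ≤ 1 + (Real.exp t - 1) * ∫ ω, X ω ∂P := by
    rw [mgf]
    have : ∫ ω, Real.exp (t * X ω) ∂P ≤ ∫ ω, (1 + (Real.exp t - 1) * X ω) ∂P := by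
      refine integral_mono_ae hint ((integrable_const 1).add (hXint.const_mul _)) ?_
      filter_upwards [hb] with ω hω
      exact exp_mul_le_of_Icc hω.1 hω.2
    rwa [integral_add (integrable_const 1) (hXint.const_mul _), integral_const,
      integral_const_mul, measureReal_def, measure_univ, ENNReal.toReal_one, one_smul] at this
  calc mgf X P t ≤ 1 + (Real.exp t - 1) * ∫ ω, X ω ∂P := h1
    _ ≤ Real.exp ((Real.exp t - 1) * ∫ ω, X ω ∂P) := by
        rw [add_comm]; exact Real.add_one_le_exp _

/-- Theorem 5, multiplicative Chernoff bound: for independent random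
variables `Z i` with values in `[0,1]` a.s., with `Z = ∑ i, Z i` and
`μ = ∑ i, E[Z i]`, for every `0 ≤ ε ≤ 1`,
`P[|Z - μ| ≥ ε μ] ≤ 2 exp (-ε² μ / 3)`. -/
theorem multiplicative_chernoff_bound {Ω : Type*} [MeasurableSpace Ω]
    (P : Measure Ω) [IsProbabilityMeasure P]
    (n : ℕ) (Z : Fin n → Ω → ℝ)
    (hmeas : ∀ i, Measurable (Z i))
    (hindep : iIndepFun Z P)
    (hbdd : ∀ i, ∀ᵐ ω ∂P, Z i ω ∈ Set.Icc (0 : ℝ) 1)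
    (ε : ℝ) (hε0 : 0 ≤ ε) (hε1 : ε ≤ 1) :
    P {ω | ε * (∑ i, ∫ ω', Z i ω' ∂P) ≤ |(∑ i, Z i ω) - ∑ i, ∫ ω', Z i ω' ∂P|} ≤
      ENNReal.ofReal (2 * Real.exp (-(ε ^ 2) * (∑ i, ∫ ω', Z i ω' ∂P) / 3)) := by
  set μ0 : ℝ := ∑ i, ∫ ω', Z i ω' ∂P with hμ0def
  have hμ0 : 0 ≤ μ0 := by
    refine Finset.sum_nonneg fun i _ => integral_nonneg_of_ae ?_
    filter_upwards [hbdd i] with ω hω using hω.1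
  -- the sum is a.e. bounded by n in absolute value
  have hbS : ∀ᵐ ω ∂P, |(∑ i, Z i) ω| ≤ (n : ℝ) := by
    rw [← ae_all_iff] at hbdd
    filter_upwards [hbdd] with ω hω
    rw [Finset.sum_apply]
    calc |∑ i, Z i ω| ≤ ∑ i, |Z i ω| := Finset.abs_sum_le_sum_abs _ _
      _ ≤ ∑ _i : Fin n, (1 : ℝ) := Finset.sum_le_sum fun i _ =>
          abs_le.2 ⟨by linarith [(hω i).1], (hω i).2⟩
      _ = (n : ℝ) := by simp
  have hmeasS : Measurable (∑ i, Z i) := by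
    have := Finset.measurable_sum (f := Z) Finset.univ (fun i _ => hmeas i)
    convert this using 1
    ext ω; simp [Finset.sum_apply]
  have hintS : ∀ t : ℝ, Integrable (fun ω => Real.exp (t * (∑ i, Z i) ω)) P :=
    fun t => integrable_exp_mul_abs_le hmeasS hbS t
  have hcgf : ∀ t : ℝ, cgf (∑ i, Z i) P t ≤ (Real.exp t - 1) * μ0 := by
    intro t
    rw [hindep.cgf_sum hmeas (fun i _ => integrable_exp_mul_of_Icc (hmeas i) (hbdd i) t),
      hμ0def, Finset.mul_sum]
    exact Finset.sum_le_sum fun i _ => cgf_le_of_Icc (hmeas i) (hbdd i) t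
  -- upper tail
  have hA : (P {ω | (1 + ε) * μ0 ≤ (∑ i, Z i) ω}).toReal ≤
      Real.exp (-(ε ^ 2) * μ0 / 3) := by
    have h := measure_ge_le_exp_cgf (X := ∑ i, Z i) (μ := P) ((1 + ε) * μ0)
      (t := 3 * ε / 4) (by linarith) (hintS _)
    refine h.trans (Real.exp_le_exp.2 ?_)
    have h2 := hcgf (3 * ε / 4)
    have h3 := mul_le_mul_of_nonneg_right (chernoff_scalar_upper hε0 hε1) hμ0
    nlinarith [h2, h3]
  -- lower tail
  have hB : (P {ω | (∑ i, Z i) ω ≤ (1 - ε) * μ0}).toReal ≤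
      Real.exp (-(ε ^ 2) * μ0 / 3) := by
    have h := measure_le_le_exp_cgf (X := ∑ i, Z i) (μ := P) ((1 - ε) * μ0)
      (t := -ε) (by linarith) (hintS _)
    refine h.trans (Real.exp_le_exp.2 ?_)
    have h2 := hcgf (-ε)
    have h3 := mul_le_mul_of_nonneg_right (chernoff_scalar_lower hε0 hε1) hμ0
    nlinarith [h2, h3]
  -- combine
  have hsub : {ω | ε * μ0 ≤ |(∑ i, Z i ω) - μ0|} ⊆
      {ω | (1 + ε) * μ0 ≤ (∑ i, Z i) ω} ∪ {ω | (∑ i, Z i) ω ≤ (1 - ε) * μ0} := by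
    intro ω hω
    simp only [Set.mem_setOf_eq] at hω
    rcases le_abs.1 hω with h | h
    · left; simp only [Set.mem_setOf_eq, Finset.sum_apply]; linarith
    · right; simp only [Set.mem_setOf_eq, Finset.sum_apply]; linarith
  calc P {ω | ε * μ0 ≤ |(∑ i, Z i ω) - μ0|}
      ≤ P ({ω | (1 + ε) * μ0 ≤ (∑ i, Z i) ω} ∪ {ω | (∑ i, Z i) ω ≤ (1 - ε) * μ0}) :=
        measure_mono hsub
    _ ≤ P {ω | (1 + ε) * μ0 ≤ (∑ i, Z i) ω} + P {ω | (∑ i, Z i) ω ≤ (1 - ε) * μ0} :=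
        measure_union_le _ _
    _ ≤ ENNReal.ofReal (Real.exp (-(ε ^ 2) * μ0 / 3)) +
        ENNReal.ofReal (Real.exp (-(ε ^ 2) * μ0 / 3)) := by
        gcongr
        · rw [← ENNReal.ofReal_toReal (measure_ne_top P _)]
          exact ENNReal.ofReal_le_ofReal hA
        · rw [← ENNReal.ofReal_toReal (measure_ne_top P _)]
          exact ENNReal.ofReal_le_ofReal hB
    _ = ENNReal.ofReal (2 * Real.exp (-(ε ^ 2) * μ0 / 3)) := by
        rw [← ENNReal.ofReal_add (Real.exp_pos _).le (Real.exp_pos _).le, two_mul]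
end

section
/- (Concentration of the estimator, Theorem 6.) Let (Ω, 𝒫) be a probability space, N and m positive integers, M : {1,…,N} → ℕ with M^i ≥ 1 for all i, f ∈ ℝ with 0 < f ≤ 1. For each i ∈ {1,…,N}, j ∈ {1,…,M^i}, h ∈ {1,…,m}, let U^i_j(h) : Ω → ℝ be random variables such that the whole family (U^i_j(h))_{i,j,h} is mutually independent, 0 ≤ U^i_j(h) ≤ M^i almost surely, and E[U^i_j(h)] = f/N. Let M* = max_{1 ≤ i ≤ N} M^i, a = (Σ_{i=1}^{N} M^i)/(N·M*), and define f̂ = (Σ_{i,j,h} U^i_j(h)) / ((m/N)·Σ_{i=1}^{N} M^i). Then for every ε with 0 ≤ ε ≤ f, 𝒫[ |f̂ − f| ≥ ε ] ≤ 2·exp(−ε²·a·m/3). -/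
open MeasureTheory ProbabilityTheory Finset

lemma exp_le_quad' {x : ℝ} (h0 : 0 ≤ x) (h1 : x ≤ 1/2) :
    Real.exp x ≤ 1 + x + (2/3) * x^2 := by
  have h := Real.exp_bound (x := x) (n := 3) (by rw [abs_of_nonneg h0]; linarith) (by norm_num)
  have h' := (abs_sub_le_iff.1 h).1
  rw [abs_of_nonneg h0] at h'
  norm_num [Finset.sum_range_succ, Nat.factorial] at h'
  nlinarith [sq_nonneg x, mul_le_mul_of_nonneg_right h1 (sq_nonneg x)]

lemma exp_neg_le_quad' {x : ℝ} (h0 : 0 ≤ x) (h1 : x ≤ 1) :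
    Real.exp (-x) ≤ 1 - x + (2/3) * x^2 := by
  have h := Real.exp_bound (x := -x) (n := 4)
    (by rw [abs_neg, abs_of_nonneg h0]; linarith) (by norm_num)
  have h' := (abs_sub_le_iff.1 h).1
  rw [abs_neg, abs_of_nonneg h0] at h'
  norm_num [Finset.sum_range_succ, Nat.factorial] at h'
  nlinarith [sq_nonneg x, pow_le_pow_of_le_one h0 h1 (show 2 ≤ 4 by norm_num),
    mul_nonneg (mul_nonneg h0 h0) h0]


lemma integrable_exp_mul_of_bdd' {Ω : Type*} [MeasurableSpace Ω] {P : Measure Ω}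
    [IsProbabilityMeasure P] {X : Ω → ℝ} (hX : Measurable X)
    (hb : ∀ᵐ ω ∂P, X ω ∈ Set.Icc (0:ℝ) 1) (s : ℝ) :
    Integrable (fun ω => Real.exp (s * X ω)) P := by
  refine Integrable.mono' (integrable_const (Real.exp |s|))
    ((hX.const_mul s).exp).aestronglyMeasurable ?_
  filter_upwards [hb] with ω hω
  rw [Real.norm_eq_abs, abs_of_nonneg (Real.exp_pos _).le, Real.exp_le_exp]
  calc s * X ω ≤ |s * X ω| := le_abs_self _
    _ = |s| * |X ω| := abs_mul _ _
    _ ≤ |s| * 1 := by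
        refine mul_le_mul_of_nonneg_left ?_ (abs_nonneg s)
        rw [abs_of_nonneg hω.1]; exact hω.2
    _ = |s| := mul_one _

lemma mgf_sum_le' {Ω ι : Type*} [MeasurableSpace Ω] [Fintype ι] {P : Measure Ω}
    [IsProbabilityMeasure P] {V : ι → Ω → ℝ} (hVmeas : ∀ i, Measurable (V i))
    (hVindep : iIndepFun V P)
    (hVbdd : ∀ i, ∀ᵐ ω ∂P, V i ω ∈ Set.Icc (0:ℝ) 1)
    {p : ℝ} (hp : 0 ≤ p) (hVexp : ∀ i, ∫ ω, V i ω ∂P = p) (s : ℝ) :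
    mgf (∑ i, V i) P s ≤ Real.exp ((Fintype.card ι) * p * (Real.exp s - 1)) := by
  have hVint : ∀ i, Integrable (V i) P := by
    intro i
    refine Integrable.mono' (integrable_const 1) (hVmeas i).aestronglyMeasurable ?_
    filter_upwards [hVbdd i] with ω hω
    rw [Real.norm_eq_abs, abs_of_nonneg hω.1]; exact hω.2
  have hEint : ∀ i, Integrable (fun ω => Real.exp (s * V i ω)) P :=
    fun i => integrable_exp_mul_of_bdd' (hVmeas i) (hVbdd i) s
  have hone : ∀ i, mgf (V i) P s ≤ Real.exp (p * (Real.exp s - 1)) := by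
    intro i
    have hpt : ∀ᵐ ω ∂P, Real.exp (s * V i ω) ≤ 1 + (Real.exp s - 1) * V i ω := by
      filter_upwards [hVbdd i] with ω hω
      have hc := convexOn_exp.2 (Set.mem_univ (0:ℝ)) (Set.mem_univ s)
        (by linarith [hω.2] : (0:ℝ) ≤ 1 - V i ω) hω.1 (by ring)
      simp only [smul_eq_mul, mul_zero, zero_add, Real.exp_zero, mul_one] at hc
      calc Real.exp (s * V i ω) = Real.exp (V i ω * s) := by rw [mul_comm]
        _ ≤ (1 - V i ω) + V i ω * Real.exp s := hc
        _ = 1 + (Real.exp s - 1) * V i ω := by ring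
    have hle : mgf (V i) P s ≤ 1 + (Real.exp s - 1) * p := by
      have := integral_mono_ae (hEint i)
        ((integrable_const (1:ℝ)).add ((hVint i).const_mul _)) hpt
      rw [mgf]
      refine this.trans_eq ?_
      simp only [Pi.add_apply]
      rw [integral_add (integrable_const _) ((hVint i).const_mul _),
        integral_const, integral_const_mul, hVexp i]
      simp
    refine hle.trans ?_
    have := Real.add_one_le_exp ((Real.exp s - 1) * p)
    calc 1 + (Real.exp s - 1) * p ≤ Real.exp ((Real.exp s - 1) * p) := by linarith
      _ = Real.exp (p * (Real.exp s - 1)) := by rw [mul_comm]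
  rw [show (∑ i, V i) = ∑ i ∈ Finset.univ, V i from rfl, hVindep.mgf_sum hVmeas]
  refine (Finset.prod_le_prod (fun i _ => mgf_nonneg) (fun i _ => hone i)).trans ?_
  rw [Finset.prod_const, Finset.card_univ, ← Real.exp_nat_mul]
  rw [mul_assoc]

lemma key_up' {f ε t₀ E : ℝ} (hf0 : 0 < f) (hf1 : f ≤ 1) (hε0 : 0 ≤ ε)
    (h2f : t₀ * (2 * f) = ε) (ht₀0 : 0 ≤ t₀)
    (hE : E ≤ 1 + t₀ + (2/3) * t₀^2) :
    -t₀ * (f + ε) + f * (E - 1) ≤ -(ε ^ 2) / 3 := by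
  have hε2 : ε ^ 2 = 4 * f ^ 2 * t₀ ^ 2 := by rw [← h2f]; ring
  have hεt : t₀ * ε = 2 * f * t₀ ^ 2 := by rw [← h2f]; ring
  nlinarith [mul_le_mul_of_nonneg_left hE hf0.le,
    mul_le_mul_of_nonneg_right hf1 (mul_nonneg hf0.le (sq_nonneg t₀))]

lemma key_lo' {f ε δ E : ℝ} (hf0 : 0 < f) (hε0 : 0 ≤ ε) (hδ0 : 0 ≤ δ)
    (hfδ : δ * f = ε) (hεδ : ε * ε ≤ ε * δ)
    (hE : E ≤ 1 - δ + (2/3) * δ^2) :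
    δ * (f - ε) + f * (E - 1) ≤ -(ε ^ 2) / 3 := by
  have hfδ2 : f * δ ^ 2 = ε * δ := by rw [← hfδ]; ring
  nlinarith [mul_le_mul_of_nonneg_left hE hf0.le]

/-- Theorem 6, concentration of the estimator: for the mutually
independent family `U i j h` with `0 ≤ U i j h ≤ M i` a.s. and `E[U i j h] = f / N`,
the estimator `f̂ = (∑ i j h, U i j h) / ((m / N) * ∑ i, M i)` satisfies, for every
`0 ≤ ε ≤ f`, `P[|f̂ - f| ≥ ε] ≤ 2 exp (-ε² a m / 3)` where
`a = (∑ i, M i) / (N * M*)` and `M* = max_i M i`. -/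
theorem estimator_concentration {Ω : Type*} [MeasurableSpace Ω]
    (P : Measure Ω) [IsProbabilityMeasure P]
    (N m : ℕ) (hN : 0 < N) (hm : 0 < m)
    (M : Fin N → ℕ) (hM : ∀ i, 1 ≤ M i)
    (f : ℝ) (hf0 : 0 < f) (hf1 : f ≤ 1)
    (U : (i : Fin N) → Fin (M i) → Fin m → Ω → ℝ)
    (hmeas : ∀ i j h, Measurable (U i j h))
    (hindep : iIndepFun
      (fun t : (i : Fin N) × Fin (M i) × Fin m => U t.1 t.2.1 t.2.2) P)
    (hbdd : ∀ i j h, ∀ᵐ ω ∂P, U i j h ω ∈ Set.Icc (0 : ℝ) (M i : ℝ))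
    (hexp : ∀ i j h, ∫ ω, U i j h ω ∂P = f / (N : ℝ))
    (ε : ℝ) (hε0 : 0 ≤ ε) (hεf : ε ≤ f) :
    P {ω | ε ≤ |(∑ i, ∑ j, ∑ h, U i j h ω) /
        (((m : ℝ) / (N : ℝ)) * ∑ i, (M i : ℝ)) - f|} ≤
      ENNReal.ofReal (2 * Real.exp
        (-(ε ^ 2) *
          ((∑ i, (M i : ℝ)) / ((N : ℝ) * ((Finset.univ.sup M : ℕ) : ℝ))) *
          (m : ℝ) / 3)) := by
  classical
  have hN' : (0:ℝ) < N := by exact_mod_cast hN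
  have hm' : (0:ℝ) < m := by exact_mod_cast hm
  have hMle : ∀ i, M i ≤ Finset.univ.sup M := fun i => Finset.le_sup (Finset.mem_univ i)
  have hMs' : (0:ℝ) < ((Finset.univ.sup M : ℕ) : ℝ) := by
    have h1 : 1 ≤ Finset.univ.sup M := le_trans (hM ⟨0,hN⟩) (hMle ⟨0,hN⟩)
    exact_mod_cast h1
  set Ms : ℝ := ((Finset.univ.sup M : ℕ) : ℝ) with hMsdef
  set SM : ℝ := ∑ i, (M i : ℝ) with hSMdef
  have hSMpos : 0 < SM :=
    Finset.sum_pos (fun i _ => by exact_mod_cast hM i) ⟨⟨0,hN⟩, Finset.mem_univ _⟩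
  set A : ℝ := (m : ℝ) * SM / ((N : ℝ) * Ms) with hAdef
  have hApos : 0 < A := div_pos (mul_pos hm' hSMpos) (mul_pos hN' hMs')
  set p : ℝ := f / ((N : ℝ) * Ms) with hpdef
  have hppos : 0 < p := div_pos hf0 (mul_pos hN' hMs')
  set V : ((i : Fin N) × Fin (M i) × Fin m) → Ω → ℝ :=
    fun t ω => U t.1 t.2.1 t.2.2 ω / Ms with hVdef
  have hVmeas : ∀ t, Measurable (V t) := fun t => (hmeas _ _ _).div_const _
  have hVindep : iIndepFun V P :=
    hindep.comp (fun _ (x : ℝ) => x / Ms) (fun _ => measurable_id.div_const _)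
  have hVbdd : ∀ t, ∀ᵐ ω ∂P, V t ω ∈ Set.Icc (0:ℝ) 1 := by
    intro t
    filter_upwards [hbdd t.1 t.2.1 t.2.2] with ω hω
    refine ⟨div_nonneg hω.1 hMs'.le, ?_⟩
    rw [div_le_one hMs']
    refine hω.2.trans ?_
    rw [hMsdef]
    exact_mod_cast hMle t.1
  have hVexp : ∀ t, ∫ ω, V t ω ∂P = p := by
    intro t
    simp only [hVdef]
    rw [integral_div, hexp, div_div]
  have hcardp : ((Fintype.card ((i : Fin N) × Fin (M i) × Fin m)) : ℝ) * p = f * A := by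
    have hc : ((Fintype.card ((i : Fin N) × Fin (M i) × Fin m)) : ℝ) = SM * m := by
      rw [Fintype.card_sigma]
      push_cast
      rw [hSMdef, Finset.sum_mul]
      exact Finset.sum_congr rfl fun i _ => by simp [Fintype.card_prod]
    rw [hc, hpdef, hAdef]
    field_simp
  have hsum : ∀ ω, (∑ t, V t) ω = (∑ i, ∑ j, ∑ h, U i j h ω) / Ms := by
    intro ω
    rw [Finset.sum_apply, ← Finset.sum_div]
    congr 1
    rw [← Finset.univ_sigma_univ, Finset.sum_sigma]
    exact Finset.sum_congr rfl fun i _ => by rw [Fintype.sum_prod_type]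
  set D : ℝ := ((m : ℝ) / (N : ℝ)) * SM with hDdef
  have hDpos : 0 < D := mul_pos (div_pos hm' hN') hSMpos
  have hDMs : (f + ε) * D / Ms = (f + ε) * A ∧ (f - ε) * D / Ms = (f - ε) * A := by
    constructor <;> (rw [hDdef, hAdef]; field_simp; try ring)
  have hincl : {ω | ε ≤ |(∑ i, ∑ j, ∑ h, U i j h ω) / D - f|} ⊆
      {ω | (f + ε) * A ≤ (∑ t, V t) ω} ∪ {ω | (∑ t, V t) ω ≤ (f - ε) * A} := by
    intro ω hω
    simp only [Set.mem_setOf_eq, Set.mem_union] at hω ⊢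
    set S := ∑ i, ∑ j, ∑ h, U i j h ω with hS
    rcases le_abs.mp hω with h | h
    · left
      have h1 : (f + ε) * D ≤ S := by
        have h2 : f + ε ≤ S / D := by linarith
        calc (f + ε) * D ≤ (S / D) * D := mul_le_mul_of_nonneg_right h2 hDpos.le
          _ = S := div_mul_cancel₀ _ hDpos.ne'
      rw [hsum ω, ← hDMs.1, ← hS]
      exact div_le_div_of_nonneg_right h1 hMs'.le
    · right
      have h1 : S ≤ (f - ε) * D := by
        have h2 : S / D ≤ f - ε := by linarith
        calc S = (S / D) * D := (div_mul_cancel₀ _ hDpos.ne').symm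
          _ ≤ (f - ε) * D := mul_le_mul_of_nonneg_right h2 hDpos.le
      rw [hsum ω, ← hDMs.2, ← hS]
      exact div_le_div_of_nonneg_right h1 hMs'.le
  -- tail bounds
  have hint : ∀ s : ℝ, Integrable (fun ω => Real.exp (s * (∑ t, V t) ω)) P := fun s =>
    iIndepFun.integrable_exp_mul_sum hVindep hVmeas
      (fun i _ => integrable_exp_mul_of_bdd' (hVmeas i) (hVbdd i) s)
  set r : ℝ := Real.exp (-(ε ^ 2) * (SM / ((N : ℝ) * Ms)) * (m : ℝ) / 3) with hrdef
  have hrA : -(ε ^ 2) * (SM / ((N : ℝ) * Ms)) * (m : ℝ) / 3 = (-(ε ^ 2) / 3) * A := by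
    rw [hAdef]; ring
  have hup : (P {ω | (f + ε) * A ≤ (∑ t, V t) ω}).toReal ≤ r := by
    set t₀ : ℝ := ε / (2 * f) with ht₀def
    have h2f0 : (0:ℝ) < 2 * f := by linarith
    have ht₀0 : 0 ≤ t₀ := div_nonneg hε0 h2f0.le
    have ht₀half : t₀ ≤ 1 / 2 := by
      rw [ht₀def, div_le_div_iff₀ h2f0 (by norm_num)]
      linarith
    have h2f : t₀ * (2 * f) = ε := div_mul_cancel₀ _ h2f0.ne'
    refine (measure_ge_le_exp_mul_mgf ((f + ε) * A) ht₀0 (hint t₀)).trans ?_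
    have hmgf := mgf_sum_le' hVmeas hVindep hVbdd hppos.le hVexp t₀
    calc Real.exp (-t₀ * ((f + ε) * A)) * mgf (∑ t, V t) P t₀
        ≤ Real.exp (-t₀ * ((f + ε) * A)) *
          Real.exp (((Fintype.card ((i : Fin N) × Fin (M i) × Fin m)) : ℝ) * p *
            (Real.exp t₀ - 1)) := by
          exact mul_le_mul_of_nonneg_left hmgf (Real.exp_pos _).le
      _ = Real.exp (-t₀ * ((f + ε) * A) + f * A * (Real.exp t₀ - 1)) := by
          rw [← Real.exp_add, hcardp]
      _ ≤ r := by
          rw [hrdef, Real.exp_le_exp, hrA]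
          have hE := exp_le_quad' ht₀0 ht₀half
          have key : -t₀ * (f + ε) + f * (Real.exp t₀ - 1) ≤ -(ε ^ 2) / 3 :=
            key_up' hf0 hf1 hε0 h2f ht₀0 hE
          calc -t₀ * ((f + ε) * A) + f * A * (Real.exp t₀ - 1)
              = (-t₀ * (f + ε) + f * (Real.exp t₀ - 1)) * A := by ring
            _ ≤ (-(ε ^ 2) / 3) * A := mul_le_mul_of_nonneg_right key hApos.le
  have hlo : (P {ω | (∑ t, V t) ω ≤ (f - ε) * A}).toReal ≤ r := by
    set δ : ℝ := ε / f with hδdef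
    have hδ0 : 0 ≤ δ := div_nonneg hε0 hf0.le
    have hδ1 : δ ≤ 1 := (div_le_one hf0).mpr hεf
    have hfδ : δ * f = ε := div_mul_cancel₀ _ hf0.ne'
    have hεle : ε ≤ δ := by
      rw [← hfδ]; exact mul_le_of_le_one_right hδ0 hf1
    have hεδ : ε * ε ≤ ε * δ := mul_le_mul_of_nonneg_left hεle hε0
    refine (measure_le_le_exp_mul_mgf ((f - ε) * A) (neg_nonpos.mpr hδ0) (hint (-δ))).trans ?_
    have hmgf := mgf_sum_le' hVmeas hVindep hVbdd hppos.le hVexp (-δ)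
    calc Real.exp (-(-δ) * ((f - ε) * A)) * mgf (∑ t, V t) P (-δ)
        ≤ Real.exp (-(-δ) * ((f - ε) * A)) *
          Real.exp (((Fintype.card ((i : Fin N) × Fin (M i) × Fin m)) : ℝ) * p *
            (Real.exp (-δ) - 1)) := by
          exact mul_le_mul_of_nonneg_left hmgf (Real.exp_pos _).le
      _ = Real.exp (δ * ((f - ε) * A) + f * A * (Real.exp (-δ) - 1)) := by
          rw [← Real.exp_add, hcardp]; ring_nf
      _ ≤ r := by
          rw [hrdef, Real.exp_le_exp, hrA]
          have hE := exp_neg_le_quad' hδ0 hδ1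
          have key : δ * (f - ε) + f * (Real.exp (-δ) - 1) ≤ -(ε ^ 2) / 3 :=
            key_lo' hf0 hε0 hδ0 hfδ hεδ hE
          calc δ * ((f - ε) * A) + f * A * (Real.exp (-δ) - 1)
              = (δ * (f - ε) + f * (Real.exp (-δ) - 1)) * A := by ring
            _ ≤ (-(ε ^ 2) / 3) * A := mul_le_mul_of_nonneg_right key hApos.le
  calc P {ω | ε ≤ |(∑ i, ∑ j, ∑ h, U i j h ω) / D - f|}
      ≤ P ({ω | (f + ε) * A ≤ (∑ t, V t) ω} ∪ {ω | (∑ t, V t) ω ≤ (f - ε) * A}) :=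
        measure_mono hincl
    _ ≤ P {ω | (f + ε) * A ≤ (∑ t, V t) ω} + P {ω | (∑ t, V t) ω ≤ (f - ε) * A} :=
        measure_union_le _ _
    _ ≤ ENNReal.ofReal r + ENNReal.ofReal r := by
        refine add_le_add ?_ ?_
        · rw [← ENNReal.ofReal_toReal (measure_ne_top P _)]
          exact ENNReal.ofReal_le_ofReal hup
        · rw [← ENNReal.ofReal_toReal (measure_ne_top P _)]
          exact ENNReal.ofReal_le_ofReal hlo
    _ = ENNReal.ofReal (2 * r) := by
        rw [← ENNReal.ofReal_add (Real.exp_nonneg _) (Real.exp_nonneg _), two_mul]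
end

section
/- (Sample size bound in terms of the item set, Theorem 8.) Let (Ω, 𝒫) be a probability space, Q a nonempty finite index set with |Q| ≤ 2^m for a natural number m, and for each s ∈ Q let ĝ_s : Ω → ℝ be a random variable and f_s ∈ ℝ a target value. Let ε, δ ∈ (0,1), a > 0, and n a positive integer. Suppose that for every s ∈ Q, 𝒫[ |ĝ_s − f_s| ≥ ε/2 ] ≤ 2·exp(−ε²·a·n/12). If n ≥ ((12·m + 12)/(ε²·a))·ln(2/δ), then 𝒫[ ∀ s ∈ Q, |ĝ_s − f_s| < ε/2 ] ≥ 1 − δ. -/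
open MeasureTheory ProbabilityTheory Finset

/-- Theorem 8, sample size bound in terms of the item set: if the
number of patterns satisfies `|Q| ≤ 2 ^ m`, the estimators concentrate as
`P[|ĝ s - f s| ≥ ε/2] ≤ 2 exp (-ε² a n / 12)`, and
`n ≥ ((12 m + 12) / (ε² a)) * ln (2 / δ)`, then with probability at least `1 - δ`
every pattern is estimated within `ε/2`. -/
theorem sample_size_bound_item_set {Ω : Type*} [MeasurableSpace Ω]
    (P : Measure Ω) [IsProbabilityMeasure P]
    (Q : Type*) [Fintype Q] [Nonempty Q]
    (m : ℕ) (hcard : Fintype.card Q ≤ 2 ^ m)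
    (g : Q → Ω → ℝ) (f : Q → ℝ)
    (ε δ a : ℝ) (hε : ε ∈ Set.Ioo (0 : ℝ) 1) (hδ : δ ∈ Set.Ioo (0 : ℝ) 1)
    (ha : 0 < a)
    (n : ℕ) (hn : 0 < n)
    (hconc : ∀ s : Q,
      P {ω | ε / 2 ≤ |g s ω - f s|} ≤
        ENNReal.ofReal (2 * Real.exp (-(ε ^ 2) * a * (n : ℝ) / 12)))
    (hsize : (n : ℝ) ≥ ((12 * (m : ℝ) + 12) / (ε ^ 2 * a)) * Real.log (2 / δ)) :
    P {ω | ∀ s : Q, |g s ω - f s| < ε / 2} ≥ ENNReal.ofReal (1 - δ) := by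
  obtain ⟨hε0, hε1⟩ := hε
  obtain ⟨hδ0, hδ1⟩ := hδ
  set A : Q → Set Ω := fun s => {ω | ε / 2 ≤ |g s ω - f s|} with hA
  have hset : {ω | ∀ s : Q, |g s ω - f s| < ε / 2} = (⋃ s, A s)ᶜ := by
    ext ω; simp [A, not_le]
  have key : (2 : ℝ) ^ (m + 1) * Real.exp (-(ε ^ 2) * a * (n : ℝ) / 12) ≤ δ := by
    have hlog : 0 < Real.log (2 / δ) := Real.log_pos (by
      rw [lt_div_iff₀ hδ0]; linarith)
    have hεa : 0 < ε ^ 2 * a := by positivity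
    have h1 : ((m : ℝ) + 1) * Real.log (2 / δ) ≤ ε ^ 2 * a * (n : ℝ) / 12 := by
      rw [ge_iff_le, div_mul_eq_mul_div, div_le_iff₀ hεa] at hsize
      nlinarith
    have h2 : Real.exp (-(ε ^ 2) * a * (n : ℝ) / 12) ≤ (δ / 2) ^ (m + 1) := by
      have heq : (δ / 2) ^ (m + 1) = Real.exp (((m : ℝ) + 1) * Real.log (δ / 2)) := by
        rw [show ((m : ℝ) + 1) = ((m + 1 : ℕ) : ℝ) by push_cast; ring,
          ← Real.log_pow, Real.exp_log (by positivity)]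
      rw [heq]
      apply Real.exp_le_exp.2
      have hneg : Real.log (δ / 2) = - Real.log (2 / δ) := by
        rw [← Real.log_inv]
        norm_num
      nlinarith
    calc (2 : ℝ) ^ (m + 1) * Real.exp (-(ε ^ 2) * a * (n : ℝ) / 12)
        ≤ (2 : ℝ) ^ (m + 1) * (δ / 2) ^ (m + 1) :=
          mul_le_mul_of_nonneg_left h2 (by positivity)
      _ = δ ^ (m + 1) := by rw [← mul_pow]; ring_nf
      _ ≤ δ ^ 1 := pow_le_pow_of_le_one hδ0.le hδ1.le (by omega)
      _ = δ := pow_one δ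
  have hreal : (Fintype.card Q : ℝ) * (2 * Real.exp (-(ε ^ 2) * a * (n : ℝ) / 12)) ≤ δ := by
    have hc : (Fintype.card Q : ℝ) ≤ (2 : ℝ) ^ m := by
      exact_mod_cast hcard
    have hexp : 0 ≤ Real.exp (-(ε ^ 2) * a * (n : ℝ) / 12) := Real.exp_nonneg _
    have : (Fintype.card Q : ℝ) * (2 * Real.exp (-(ε ^ 2) * a * (n : ℝ) / 12))
        ≤ (2 : ℝ) ^ m * (2 * Real.exp (-(ε ^ 2) * a * (n : ℝ) / 12)) := by
      apply mul_le_mul_of_nonneg_right hc (by positivity)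
    refine this.trans ?_
    have : (2 : ℝ) ^ m * (2 * Real.exp (-(ε ^ 2) * a * (n : ℝ) / 12))
        = (2 : ℝ) ^ (m + 1) * Real.exp (-(ε ^ 2) * a * (n : ℝ) / 12) := by
      rw [pow_succ]; ring
    rw [this]; exact key
  have hunion : P (⋃ s, A s) ≤ ENNReal.ofReal δ := by
    calc P (⋃ s, A s) ≤ ∑ s, P (A s) := measure_iUnion_fintype_le P A
      _ ≤ ∑ _s : Q, ENNReal.ofReal (2 * Real.exp (-(ε ^ 2) * a * (n : ℝ) / 12)) :=
          Finset.sum_le_sum fun s _ => hconc s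
      _ = (Fintype.card Q) • ENNReal.ofReal (2 * Real.exp (-(ε ^ 2) * a * (n : ℝ) / 12)) := by
          simp [Finset.sum_const]
      _ = ENNReal.ofReal ((Fintype.card Q : ℝ) * (2 * Real.exp (-(ε ^ 2) * a * (n : ℝ) / 12))) := by
          rw [nsmul_eq_mul, ← ENNReal.ofReal_natCast (Fintype.card Q),
            ← ENNReal.ofReal_mul (by positivity)]
      _ ≤ ENNReal.ofReal δ := ENNReal.ofReal_le_ofReal hreal
  rw [hset]
  have hsub : (1 : ENNReal) ≤ P (⋃ s, A s) + P ((⋃ s, A s)ᶜ) := by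
    have h := measure_union_le (μ := P) (⋃ s, A s) ((⋃ s, A s)ᶜ)
    simpa only [Set.union_compl_self, measure_univ] using h
  calc ENNReal.ofReal (1 - δ) = 1 - ENNReal.ofReal δ := by
        rw [ENNReal.ofReal_sub 1 hδ0.le, ENNReal.ofReal_one]
    _ ≤ P ((⋃ s, A s)ᶜ) := by
        rw [tsub_le_iff_right]
        calc (1 : ENNReal) ≤ P (⋃ s, A s) + P ((⋃ s, A s)ᶜ) := hsub
          _ ≤ ENNReal.ofReal δ + P ((⋃ s, A s)ᶜ) := add_le_add_left hunion _
          _ = P ((⋃ s, A s)ᶜ) + ENNReal.ofReal δ := add_comm _ _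
end
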